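/- Let n be a positive integer, A₋₁ an invertible n×n complex matrix, A₂, A₃ : [-1,0] → ℂ^{n×n} matrix-valued functions with square-integrable entries, and Δ(λ) the characteristic matrix function. Let c ∈ ℝ satisfy c > ln|μ| for every eigenvalue μ of A₋₁. Then the set of zeros of det Δ in the half-plane {λ ∈ ℂ : Re λ ≥ c} is finite. -/

import Mathlib

open MeasureTheory Complex Set

/-- The characteristic matrix function `Δ(λ)` of the neutral type system. -/
noncomputable def Delta {n : ℕ} (Am1 : Matrix (Fin n) (Fin n) ℂ)
    (A2 A3 : ℝ → Matrix (Fin n) (Fin n) ℂ) (lam : ℂ) : Matrix (Fin n) (Fin n) ℂ :=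
  (-lam) • (1 : Matrix (Fin n) (Fin n) ℂ)
    + (lam * Complex.exp (-lam)) • Am1
    + lam • Matrix.of (fun i j => ∫ s in Set.Ioc (-1:ℝ) 0, Complex.exp (lam * s) * A2 s i j)
    + Matrix.of (fun i j => ∫ s in Set.Ioc (-1:ℝ) 0, Complex.exp (lam * s) * A3 s i j)

open Filter Topology

noncomputable def lapInt (g : ℝ → ℂ) (lam : ℂ) : ℂ :=
  ∫ s in Set.Ioc (-1:ℝ) 0, Complex.exp (lam * s) * g s

lemma norm_cexp_mul_real (lam : ℂ) (s : ℝ) :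
    ‖Complex.exp (lam * s)‖ = Real.exp (lam.re * s) := by
  rw [Complex.norm_exp]
  congr 1
  simp [Complex.mul_re]

instance : IsFiniteMeasure (volume.restrict (Set.Ioc (-1:ℝ) 0)) := by
  constructor
  rw [Measure.restrict_apply_univ, Real.volume_Ioc]
  simp

lemma exp_mul_le {c x s : ℝ} (hx : c ≤ x) (hs : s ∈ Set.Ioc (-1:ℝ) 0) :
    Real.exp (x * s) ≤ max 1 (Real.exp (-c)) := by
  rcases le_or_gt 0 x with h | h
  · refine le_max_of_le_left ?_
    rw [← Real.exp_zero]
    exact Real.exp_le_exp.2 (mul_nonpos_of_nonneg_of_nonpos h hs.2)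
  · refine le_max_of_le_right (Real.exp_le_exp.2 ?_)
    have : x * s ≤ x * (-1) := mul_le_mul_of_nonpos_left hs.1.le h.le
    nlinarith

lemma aesm_exp_mul {g : ℝ → ℂ} (hg : AEStronglyMeasurable g (volume.restrict (Set.Ioc (-1:ℝ) 0)))
    (lam : ℂ) : AEStronglyMeasurable (fun s : ℝ => Complex.exp (lam * s) * g s)
      (volume.restrict (Set.Ioc (-1:ℝ) 0)) :=
  ((Complex.continuous_exp.comp (continuous_const.mul Complex.continuous_ofReal)).aestronglyMeasurable).mul hg

lemma integrable_exp_mul {g : ℝ → ℂ} (hg : Integrable g (volume.restrict (Set.Ioc (-1:ℝ) 0)))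
    (lam : ℂ) : Integrable (fun s : ℝ => Complex.exp (lam * s) * g s)
      (volume.restrict (Set.Ioc (-1:ℝ) 0)) := by
  refine Integrable.mono' (hg.norm.const_mul (Real.exp |lam.re|)) (aesm_exp_mul hg.1 lam) ?_
  filter_upwards [ae_restrict_mem measurableSet_Ioc] with s hs
  rw [norm_mul, norm_cexp_mul_real]
  gcongr ?_ * _
  have h1 : lam.re * s ≤ |lam.re * s| := le_abs_self _
  have h2 : |lam.re * s| ≤ |lam.re| := by
    rw [abs_mul]
    have h3 : |s| ≤ 1 := by
      rw [abs_le]; exact ⟨by linarith [hs.1.le], by linarith [hs.2]⟩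
    nlinarith [abs_nonneg lam.re]
  exact Real.exp_le_exp.2 (h1.trans h2)

lemma norm_lapInt_le {g : ℝ → ℂ} (hg : Integrable g (volume.restrict (Set.Ioc (-1:ℝ) 0)))
    {c : ℝ} {lam : ℂ} (hre : c ≤ lam.re) :
    ‖lapInt g lam‖ ≤ max 1 (Real.exp (-c)) * ∫ s in Set.Ioc (-1:ℝ) 0, ‖g s‖ := by
  refine (norm_integral_le_integral_norm _).trans ?_
  rw [← integral_const_mul]
  refine integral_mono_ae ((integrable_exp_mul hg lam).norm) ((hg.norm).const_mul _) ?_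
  filter_upwards [ae_restrict_mem measurableSet_Ioc] with s hs
  rw [norm_mul, norm_cexp_mul_real]
  gcongr
  exact exp_mul_le hre hs

/-- high real part: integral tends to 0 -/
lemma tendsto_lapInt_high {g : ℝ → ℂ} (hg : Integrable g (volume.restrict (Set.Ioc (-1:ℝ) 0)))
    {c : ℝ} (lam : ℕ → ℂ) (hre : ∀ k, c ≤ (lam k).re)
    (hx : Tendsto (fun k => (lam k).re) atTop atTop) :
    Tendsto (fun k => lapInt g (lam k)) atTop (𝓝 0) := by
  have := MeasureTheory.tendsto_integral_of_dominated_convergence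
    (μ := volume.restrict (Set.Ioc (-1:ℝ) 0))
    (F := fun k s => Complex.exp (lam k * s) * g s) (f := fun _ => (0:ℂ))
    (bound := fun s => max 1 (Real.exp (-c)) * ‖g s‖)
    (fun k => aesm_exp_mul hg.1 (lam k)) (hg.norm.const_mul _) ?_ ?_
  · simpa [lapInt] using this
  · intro k
    filter_upwards [ae_restrict_mem measurableSet_Ioc] with s hs
    rw [norm_mul, norm_cexp_mul_real]
    gcongr ?_ * _
    exact exp_mul_le (hre k) hs
  · have hzero : ∀ᵐ s ∂(volume.restrict (Set.Ioc (-1:ℝ) 0)), s ≠ 0 := by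
      refine ae_iff.2 ?_
      have h1 : {a : ℝ | ¬ a ≠ 0} = {0} := by ext a; simp
      rw [h1]
      exact le_antisymm ((Measure.restrict_le_self _).trans_eq (Real.volume_singleton)) bot_le
    filter_upwards [ae_restrict_mem measurableSet_Ioc, hzero] with s hs hs0
    have hsneg : s < 0 := lt_of_le_of_ne hs.2 hs0
    rw [tendsto_zero_iff_norm_tendsto_zero]
    simp only [norm_mul, norm_cexp_mul_real]
    rw [show (0:ℝ) = 0 * ‖g s‖ by ring]
    refine Tendsto.mul_const _ ?_
    refine Real.tendsto_exp_atBot.comp ?_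
    exact Tendsto.atTop_mul_const_of_neg hsneg hx |>.congr (fun k => rfl)

lemma tendsto_cocompact_of_abs {u : ℕ → ℝ} (h : Tendsto (fun k => |u k|) atTop atTop) :
    Tendsto u atTop (cocompact ℝ) := by
  rw [Filter.hasBasis_cocompact.tendsto_right_iff]
  intro K hK
  obtain ⟨r, hr⟩ := hK.isBounded.subset_closedBall 0
  filter_upwards [h.eventually_gt_atTop r] with k hk
  intro hmem
  have := hr hmem
  rw [Metric.mem_closedBall, Real.dist_eq, sub_zero] at this
  linarith

/-- Riemann-Lebesgue case : real parts converge, |imaginary parts| → ∞. -/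
lemma tendsto_lapInt_RL {g : ℝ → ℂ} (hg : Integrable g (volume.restrict (Set.Ioc (-1:ℝ) 0)))
    {c : ℝ} (lam : ℕ → ℂ) (hre : ∀ k, c ≤ (lam k).re) (x' : ℝ)
    (hx : Tendsto (fun k => (lam k).re) atTop (𝓝 x'))
    (ht : Tendsto (fun k => |(lam k).im|) atTop atTop) :
    Tendsto (fun k => lapInt g (lam k)) atTop (𝓝 0) := by
  have hx'c : c ≤ x' := ge_of_tendsto' hx (fun k => hre k)
  set μ := volume.restrict (Set.Ioc (-1:ℝ) 0) with hμ
  set Ψ : ℕ → ℝ → ℂ := fun k s => Complex.exp (((x':ℂ) + (lam k).im * Complex.I) * s) * g s with hΨ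
  have hΨre : ∀ k, ((x' : ℂ) + (lam k).im * Complex.I).re = x' := by intro k; simp
  have hΨint : ∀ k, Integrable (Ψ k) μ := fun k => integrable_exp_mul hg _
  have hΦint : ∀ k, Integrable (fun s : ℝ => Complex.exp (lam k * s) * g s) μ :=
    fun k => integrable_exp_mul hg _
  -- difference tends to zero
  have hdiff : Tendsto (fun k => ∫ s in Set.Ioc (-1:ℝ) 0,
      (Complex.exp (lam k * s) * g s - Ψ k s)) atTop (𝓝 0) := by
    have := MeasureTheory.tendsto_integral_of_dominated_convergence
      (μ := μ) (F := fun k s => Complex.exp (lam k * s) * g s - Ψ k s) (f := fun _ => (0:ℂ))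
      (bound := fun s => (2 * max 1 (Real.exp (-c))) * ‖g s‖)
      (fun k => ((hΦint k).sub (hΨint k)).1) (hg.norm.const_mul _) ?_ ?_
    · simpa using this
    · intro k
      filter_upwards [ae_restrict_mem measurableSet_Ioc] with s hs
      have h1 : ‖Complex.exp (lam k * s) * g s - Ψ k s‖
          ≤ ‖Complex.exp (lam k * s)‖ * ‖g s‖
            + ‖Complex.exp (((x':ℂ) + (lam k).im * Complex.I) * s)‖ * ‖g s‖ := by
        refine (norm_sub_le _ _).trans ?_
        simp [hΨ, norm_mul]
      refine h1.trans ?_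
      rw [norm_cexp_mul_real, norm_cexp_mul_real, hΨre]
      have e1 := exp_mul_le (hre k) hs
      have e2' : Real.exp (x' * s) ≤ max 1 (Real.exp (-c)) := by
        refine (exp_mul_le (le_refl x') hs).trans (max_le_max le_rfl ?_)
        exact Real.exp_le_exp.2 (by linarith)
      nlinarith [norm_nonneg (g s)]
    · filter_upwards [ae_restrict_mem measurableSet_Ioc] with s hs
      rw [tendsto_zero_iff_norm_tendsto_zero]
      have key : ∀ k, ‖Complex.exp (lam k * s) * g s - Ψ k s‖
          = |Real.exp ((lam k).re * s) - Real.exp (x' * s)| * ‖g s‖ := by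
        intro k
        have hfac : Complex.exp (lam k * s) - Complex.exp (((x':ℂ) + (lam k).im * Complex.I) * s)
            = Complex.exp ((lam k).im * Complex.I * s) *
              ((Real.exp ((lam k).re * s) : ℂ) - (Real.exp (x' * s) : ℂ)) := by
          rw [mul_sub, Complex.ofReal_exp, Complex.ofReal_exp, ← Complex.exp_add,
            ← Complex.exp_add]
          congr 2
          · conv_lhs => rw [(Complex.re_add_im (lam k)).symm]
            push_cast; ring
          · push_cast; ring
        rw [hΨ]
        simp only []
        rw [← sub_mul, hfac, norm_mul, norm_mul, norm_cexp_mul_real]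
        have him : (((lam k).im : ℂ) * Complex.I).re = 0 := by simp
        rw [him, zero_mul, Real.exp_zero, one_mul, ← Complex.ofReal_sub]
        rw [Complex.norm_real, Real.norm_eq_abs]
      simp only [key]
      rw [show (0:ℝ) = 0 * ‖g s‖ by ring]
      refine Tendsto.mul_const _ ?_
      have : Tendsto (fun k => Real.exp ((lam k).re * s)) atTop (𝓝 (Real.exp (x' * s))) := by
        exact (Real.continuous_exp.tendsto _).comp ((hx.mul_const s))
      have h0 := this.sub (tendsto_const_nhds (x := Real.exp (x' * s)))
      rw [sub_self] at h0
      simpa using h0.abs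
  -- main term tends to zero by Riemann-Lebesgue
  have hmain : Tendsto (fun k => ∫ s in Set.Ioc (-1:ℝ) 0, Ψ k s) atTop (𝓝 0) := by
    set H : ℝ → ℂ := Set.indicator (Set.Ioc (-1:ℝ) 0) (fun s => Complex.exp ((x':ℂ) * s) * g s)
      with hH
    have hconv : ∀ k, ∫ s in Set.Ioc (-1:ℝ) 0, Ψ k s
        = ∫ v : ℝ, Real.fourierChar (-(v * (-(lam k).im / (2 * Real.pi)))) • H v := by
      intro k
      rw [← integral_indicator measurableSet_Ioc]
      congr 1; ext v
      by_cases hv : v ∈ Set.Ioc (-1:ℝ) 0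
      · rw [Set.indicator_of_mem hv, hH, Set.indicator_of_mem hv, Circle.smul_def,
          Real.fourierChar_apply]
        have hπ : (2 : ℝ) * Real.pi * -(v * (-(lam k).im / (2 * Real.pi))) = v * (lam k).im := by
          have := Real.pi_ne_zero; field_simp
        rw [hπ, hΨ]
        simp only []
        rw [smul_eq_mul, ← mul_assoc, ← Complex.exp_add]
        congr 2
        push_cast; ring
      · rw [Set.indicator_of_notMem hv, hH, Set.indicator_of_notMem hv, smul_zero]
    rw [show (fun k => ∫ s in Set.Ioc (-1:ℝ) 0, Ψ k s)
      = fun k => ∫ v : ℝ, Real.fourierChar (-(v * (-(lam k).im / (2 * Real.pi)))) • H v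
      from funext hconv]
    refine (Real.tendsto_integral_exp_smul_cocompact H).comp (tendsto_cocompact_of_abs ?_)
    have h2π : (0:ℝ) < 2 * Real.pi := by positivity
    have : (fun k => |(-(lam k).im / (2 * Real.pi))|) = fun k => |(lam k).im| / (2 * Real.pi) := by
      funext k; rw [abs_div, abs_neg, abs_of_pos h2π]
    rw [this]
    exact ht.atTop_div_const h2π
  have := hdiff.add hmain
  rw [add_zero] at this
  refine this.congr (fun k => ?_)
  rw [integral_sub (hΦint k) (hΨint k)]
  simp [lapInt, hμ]

lemma differentiable_lapInt {g : ℝ → ℂ}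
    (hg : Integrable g (volume.restrict (Set.Ioc (-1:ℝ) 0))) :
    Differentiable ℂ (lapInt g) := by
  intro lam0
  have key := hasDerivAt_integral_of_dominated_loc_of_deriv_le
    (μ := volume.restrict (Set.Ioc (-1:ℝ) 0)) (x₀ := lam0) (s := Metric.ball lam0 1) (Metric.ball_mem_nhds lam0 one_pos)
    (F := fun lam s => Complex.exp (lam * s) * g s)
    (F' := fun lam s => (Complex.exp (lam * s) * s) * g s)
    (bound := fun s => Real.exp (|lam0.re| + 1) * ‖g s‖)
    ?_ (integrable_exp_mul hg lam0) ?_ ?_ (hg.norm.const_mul _) ?_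
  · exact key.2.differentiableAt
  · filter_upwards with lam using aesm_exp_mul hg.1 lam
  · exact (((Complex.continuous_exp.comp (continuous_const.mul Complex.continuous_ofReal)).mul
      Complex.continuous_ofReal).aestronglyMeasurable).mul hg.1
  · filter_upwards [ae_restrict_mem measurableSet_Ioc] with s hs lam hlam
    rw [norm_mul, norm_mul, norm_cexp_mul_real]
    have hs1 : |s| ≤ 1 := by
      rw [abs_le]; exact ⟨by linarith [hs.1.le], by linarith [hs.2]⟩
    have hb : ‖(s : ℂ)‖ ≤ 1 := by rwa [Complex.norm_real, Real.norm_eq_abs]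
    have hre : |lam.re| ≤ |lam0.re| + 1 := by
      have h1 : |lam.re - lam0.re| ≤ ‖lam - lam0‖ := by
        rw [← Complex.sub_re]; exact Complex.abs_re_le_norm _
      have h2 : ‖lam - lam0‖ < 1 := by rwa [Metric.mem_ball, dist_eq_norm] at hlam
      calc |lam.re| ≤ |lam0.re| + |lam.re - lam0.re| := by
            have := abs_sub_abs_le_abs_sub lam.re lam0.re; linarith [abs_sub_comm lam.re lam0.re]
        _ ≤ |lam0.re| + 1 := by linarith
    have hexp : Real.exp (lam.re * s) ≤ Real.exp (|lam0.re| + 1) := by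
      refine Real.exp_le_exp.2 ?_
      have : lam.re * s ≤ |lam.re * s| := le_abs_self _
      have h3 : |lam.re * s| ≤ |lam.re| := by
        rw [abs_mul]; nlinarith [abs_nonneg lam.re]
      linarith
    have step1 : Real.exp (lam.re * s) * ‖(s:ℂ)‖ ≤ Real.exp (|lam0.re| + 1) := by
      nlinarith [norm_nonneg ((s:ℂ)), (Real.exp_pos (lam.re * s)).le]
    nlinarith [norm_nonneg (g s), mul_le_mul_of_nonneg_right step1 (norm_nonneg (g s))]
  · filter_upwards with s lam _
    have h1 : HasDerivAt (fun lam : ℂ => lam * s) (s : ℂ) lam := by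
      simpa using (hasDerivAt_id lam).mul_const (s : ℂ)
    exact h1.cexp.mul_const (g s)

noncomputable def Mmat {n : ℕ} (Am1 : Matrix (Fin n) (Fin n) ℂ)
    (A2 A3 : ℝ → Matrix (Fin n) (Fin n) ℂ) (lam : ℂ) : Matrix (Fin n) (Fin n) ℂ :=
  (1 : Matrix (Fin n) (Fin n) ℂ)
    - Complex.exp (-lam) • Am1
    - Matrix.of (fun i j => lapInt (fun θ => A2 θ i j) lam)
    - lam⁻¹ • Matrix.of (fun i j => lapInt (fun θ => A3 θ i j) lam)

lemma Delta_eq_smul_Mmat {n : ℕ} (Am1 : Matrix (Fin n) (Fin n) ℂ)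
    (A2 A3 : ℝ → Matrix (Fin n) (Fin n) ℂ) {lam : ℂ} (h : lam ≠ 0) :
    Delta Am1 A2 A3 lam = (-lam) • Mmat Am1 A2 A3 lam := by
  ext i j
  simp only [Delta, Mmat, lapInt, Matrix.add_apply, Matrix.sub_apply, Matrix.smul_apply,
    Matrix.one_apply, Matrix.of_apply, smul_eq_mul]
  by_cases hij : i = j <;> simp only [hij, ite_true, ite_false] <;> field_simp <;> ring

lemma det_Delta_eq {n : ℕ} (Am1 : Matrix (Fin n) (Fin n) ℂ)
    (A2 A3 : ℝ → Matrix (Fin n) (Fin n) ℂ) {lam : ℂ} (h : lam ≠ 0) :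
    (Delta Am1 A2 A3 lam).det = (-lam) ^ n * (Mmat Am1 A2 A3 lam).det := by
  rw [Delta_eq_smul_Mmat Am1 A2 A3 h, Matrix.det_smul]
  simp

lemma det_one_sub_smul_ne {n : ℕ} (Am1 : Matrix (Fin n) (Fin n) ℂ) {c : ℝ}
    (hc : ∀ μ ∈ spectrum ℂ Am1, Real.log ‖μ‖ < c)
    {w : ℂ} (hw : ‖w‖ ≤ Real.exp (-c)) :
    ((1 : Matrix (Fin n) (Fin n) ℂ) - w • Am1).det ≠ 0 := by
  intro hdet
  rcases eq_or_ne w 0 with rfl | hw0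
  · simp at hdet
  have hmem : w⁻¹ ∈ spectrum ℂ Am1 := by
    rw [spectrum.mem_iff]
    intro hunit
    rw [Matrix.isUnit_iff_isUnit_det] at hunit
    have heq : (algebraMap ℂ (Matrix (Fin n) (Fin n) ℂ)) w⁻¹ - Am1
        = w⁻¹ • ((1 : Matrix (Fin n) (Fin n) ℂ) - w • Am1) := by
      rw [smul_sub, smul_smul, inv_mul_cancel₀ hw0, one_smul, Algebra.algebraMap_eq_smul_one]
    rw [heq, Matrix.det_smul, hdet, mul_zero] at hunit
    exact (by simp : ¬ IsUnit (0:ℂ)) hunit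
  have hlog := hc _ hmem
  have habs : Real.exp c ≤ ‖w⁻¹‖ := by
    rw [norm_inv]
    have h1 : 0 < ‖w‖ := norm_pos_iff.2 hw0
    have h2 : 0 < Real.exp (-c) := Real.exp_pos _
    rw [le_inv_comm₀ (Real.exp_pos c) h1]
    rwa [← Real.exp_neg]
  have : c ≤ Real.log ‖w⁻¹‖ := by
    rw [Real.le_log_iff_exp_le]
    · exact habs
    · exact lt_of_lt_of_le (Real.exp_pos c) habs
  linarith

variable {n : ℕ} (Am1 : Matrix (Fin n) (Fin n) ℂ) (A2 A3 : ℝ → Matrix (Fin n) (Fin n) ℂ)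

lemma differentiable_detDelta
    (hA2 : ∀ i j, Integrable (fun θ => A2 θ i j) (volume.restrict (Set.Ioc (-1:ℝ) 0)))
    (hA3 : ∀ i j, Integrable (fun θ => A3 θ i j) (volume.restrict (Set.Ioc (-1:ℝ) 0))) :
    Differentiable ℂ (fun lam => (Delta Am1 A2 A3 lam).det) := by
  classical
  have hentry : ∀ i j, Differentiable ℂ (fun lam => Delta Am1 A2 A3 lam i j) := by
    intro i j
    have heq : (fun lam => Delta Am1 A2 A3 lam i j) = fun lam =>
        -lam * (if i = j then 1 else 0) + (lam * Complex.exp (-lam)) * Am1 i j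
          + lam * lapInt (fun θ => A2 θ i j) lam + lapInt (fun θ => A3 θ i j) lam := by
      funext lam
      simp [Delta, lapInt, Matrix.add_apply, Matrix.smul_apply, Matrix.one_apply,
        smul_eq_mul, Matrix.of_apply]
      split <;> ring
    rw [heq]
    have d1 : Differentiable ℂ (fun lam : ℂ => -lam * (if i = j then 1 else 0)) :=
      differentiable_id.neg.mul_const _
    have d2 : Differentiable ℂ (fun lam : ℂ => (lam * Complex.exp (-lam)) * Am1 i j) :=
      (differentiable_id.mul (differentiable_id.neg.cexp)).mul_const _
    have d3 : Differentiable ℂ (fun lam : ℂ => lam * lapInt (fun θ => A2 θ i j) lam) :=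
      differentiable_id.mul (differentiable_lapInt (hA2 i j))
    exact ((d1.add d2).add d3).add (differentiable_lapInt (hA3 i j))
  have hdet : (fun lam => (Delta Am1 A2 A3 lam).det) = fun lam =>
      ∑ σ : Equiv.Perm (Fin n), ((Equiv.Perm.sign σ : ℤ) : ℂ)
        * ∏ i, Delta Am1 A2 A3 lam (σ i) i := by
    funext lam
    rw [Matrix.det_apply]
    congr 1; funext σ
    rw [Units.smul_def, zsmul_eq_mul]
  rw [hdet]
  apply Differentiable.fun_sum
  intro σ _
  exact (Differentiable.fun_finset_prod (fun i _ => hentry (σ i) i)).const_mul _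

lemma tendsto_det_Mmat
    (hA2 : ∀ i j, Integrable (fun θ => A2 θ i j) (volume.restrict (Set.Ioc (-1:ℝ) 0)))
    (hA3 : ∀ i j, Integrable (fun θ => A3 θ i j) (volume.restrict (Set.Ioc (-1:ℝ) 0)))
    {c : ℝ} (lam : ℕ → ℂ) (hre : ∀ k, c ≤ (lam k).re)
    (hn : Tendsto (fun k => ‖lam k‖) atTop atTop)
    {w : ℂ} (hw : Tendsto (fun k => Complex.exp (-(lam k))) atTop (𝓝 w)) :
    Tendsto (fun k => (Mmat Am1 A2 A3 (lam k)).det) atTop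
      (𝓝 ((1 - w • Am1 : Matrix (Fin n) (Fin n) ℂ).det)) := by
  have hnormexp : ∀ k, ‖Complex.exp (-(lam k))‖ = Real.exp (-(lam k).re) := by
    intro k
    rw [Complex.norm_exp]
    simp
  -- convergence of the lapInt terms
  have hB2 : ∀ (g : ℝ → ℂ), Integrable g (volume.restrict (Set.Ioc (-1:ℝ) 0)) →
      Tendsto (fun k => lapInt g (lam k)) atTop (𝓝 0) := by
    intro g hg
    rcases eq_or_ne w 0 with rfl | hw0
    · refine tendsto_lapInt_high hg lam hre ?_
      have h1 : Tendsto (fun k => Real.exp (-(lam k).re)) atTop (𝓝 0) := by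
        have := hw.norm
        simp only [norm_zero] at this
        exact this.congr (fun k => hnormexp k)
      rw [Real.tendsto_exp_comp_nhds_zero] at h1
      exact tendsto_neg_atBot_iff.1 h1
    · have hnorm : Tendsto (fun k => ‖Complex.exp (-(lam k))‖) atTop (𝓝 ‖w‖) := hw.norm
      have hlog : Tendsto (fun k => Real.log ‖Complex.exp (-(lam k))‖) atTop
          (𝓝 (Real.log ‖w‖)) :=
        ((Real.continuousAt_log (norm_ne_zero_iff.2 hw0)).tendsto).comp hnorm
      have hre' : Tendsto (fun k => (lam k).re) atTop (𝓝 (-Real.log ‖w‖)) := by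
        have heq : ∀ k, Real.log ‖Complex.exp (-(lam k))‖ = -(lam k).re := by
          intro k; rw [hnormexp k, Real.log_exp]
        rw [show (fun k => Real.log ‖Complex.exp (-(lam k))‖) = fun k => -(lam k).re
          from funext heq] at hlog
        simpa using hlog.neg
      refine tendsto_lapInt_RL hg lam hre _ hre' ?_
      have habs : Tendsto (fun k => |(lam k).re|) atTop (𝓝 |(-Real.log ‖w‖)|) := hre'.abs
      have hsum : Tendsto (fun k => -|(lam k).re| + ‖lam k‖) atTop atTop :=
        (habs.neg).add_atTop hn
      refine tendsto_atTop_mono (fun k => ?_) hsum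
      have := Complex.norm_le_abs_re_add_abs_im (lam k)
      linarith
  have hB3 : ∀ (g : ℝ → ℂ), Integrable g (volume.restrict (Set.Ioc (-1:ℝ) 0)) →
      Tendsto (fun k => (lam k)⁻¹ * lapInt g (lam k)) atTop (𝓝 0) := by
    intro g hg
    refine squeeze_zero_norm (a := fun k => ‖lam k‖⁻¹ *
      (max 1 (Real.exp (-c)) * ∫ s in Set.Ioc (-1:ℝ) 0, ‖g s‖)) (fun k => ?_) ?_
    · rw [norm_mul, norm_inv]
      exact mul_le_mul_of_nonneg_left (norm_lapInt_le hg (hre k))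
        (inv_nonneg.2 (norm_nonneg _))
    · have h1 : Tendsto (fun k => ‖lam k‖⁻¹) atTop (𝓝 0) := tendsto_inv_atTop_zero.comp hn
      simpa using h1.mul_const _
  -- entrywise convergence of the matrices
  have hmat : Tendsto (fun k => Mmat Am1 A2 A3 (lam k)) atTop
      (𝓝 ((1 - w • Am1 : Matrix (Fin n) (Fin n) ℂ))) := by
    refine tendsto_pi_nhds.2 (fun i => ?_)
    rw [tendsto_pi_nhds]
    intro j
    have hlim : Tendsto (fun k => (1 : Matrix (Fin n) (Fin n) ℂ) i j
        - Complex.exp (-(lam k)) * Am1 i j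
        - lapInt (fun θ => A2 θ i j) (lam k)
        - (lam k)⁻¹ * lapInt (fun θ => A3 θ i j) (lam k)) atTop
        (𝓝 ((1 : Matrix (Fin n) (Fin n) ℂ) i j - w * Am1 i j - 0 - 0)) :=
      ((tendsto_const_nhds.sub (hw.mul_const _)).sub (hB2 _ (hA2 i j))).sub (hB3 _ (hA3 i j))
    rw [sub_zero, sub_zero] at hlim
    refine hlim.congr' ?_ |>.mono_right (le_of_eq ?_)
    · filter_upwards with k
      simp [Mmat, Matrix.sub_apply, Matrix.smul_apply, Matrix.of_apply, smul_eq_mul]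
    · congr 1
  exact ((Continuous.matrix_det continuous_id).tendsto _).comp hmat

theorem finitely_many_zeros_in_right_half_plane
    (n : ℕ) (hn : 0 < n) (Am1 : Matrix (Fin n) (Fin n) ℂ)
    (hinv : IsUnit Am1)
    (A2 A3 : ℝ → Matrix (Fin n) (Fin n) ℂ)
    (hA2 : ∀ i j, MeasureTheory.MemLp (fun θ => A2 θ i j) 2
      (volume.restrict (Set.Ioc (-1:ℝ) 0)))
    (hA3 : ∀ i j, MeasureTheory.MemLp (fun θ => A3 θ i j) 2
      (volume.restrict (Set.Ioc (-1:ℝ) 0)))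
    (c : ℝ) (hc : ∀ μ ∈ spectrum ℂ Am1, Real.log ‖μ‖ < c) :
    {lam : ℂ | (Delta Am1 A2 A3 lam).det = 0 ∧ c ≤ lam.re}.Finite := by
  classical
  have hA2' : ∀ i j, Integrable (fun θ => A2 θ i j) (volume.restrict (Set.Ioc (-1:ℝ) 0)) :=
    fun i j => (hA2 i j).integrable one_le_two
  have hA3' : ∀ i j, Integrable (fun θ => A3 θ i j) (volume.restrict (Set.Ioc (-1:ℝ) 0)) :=
    fun i j => (hA3 i j).integrable one_le_two
  set f : ℂ → ℂ := fun lam => (Delta Am1 A2 A3 lam).det with hfdef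
  set S : Set ℂ := {lam : ℂ | (Delta Am1 A2 A3 lam).det = 0 ∧ c ≤ lam.re} with hSdef
  have hnormexp : ∀ z : ℂ, ‖Complex.exp (-z)‖ = Real.exp (-z.re) := by
    intro z; rw [Complex.norm_exp]; simp
  -- there is a point where f is nonzero
  have hexists : ∃ z : ℂ, f z ≠ 0 := by
    set lamseq : ℕ → ℂ := fun k => ((max c 0 + 1 + k : ℝ) : ℂ) with hlamseq
    have hpos : ∀ k : ℕ, (0:ℝ) < max c 0 + 1 + k := by
      intro k
      have : (0:ℝ) ≤ (k:ℝ) := Nat.cast_nonneg k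
      have := le_max_right c 0
      linarith
    have hre : ∀ k, c ≤ (lamseq k).re := by
      intro k
      simp only [hlamseq, Complex.ofReal_re]
      have h1 := le_max_left c 0
      have : (0:ℝ) ≤ (k:ℝ) := Nat.cast_nonneg k
      linarith
    have hretop : Tendsto (fun k => (lamseq k).re) atTop atTop := by
      simp only [hlamseq, Complex.ofReal_re]
      exact tendsto_atTop_add_const_left _ _ tendsto_natCast_atTop_atTop
    have hnorm : Tendsto (fun k => ‖lamseq k‖) atTop atTop := by
      refine tendsto_atTop_mono (fun k => ?_) hretop
      exact Complex.re_le_norm _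
    have hw : Tendsto (fun k => Complex.exp (-(lamseq k))) atTop (𝓝 0) := by
      refine squeeze_zero_norm (fun k => le_of_eq (hnormexp _)) ?_
      exact Real.tendsto_exp_atBot.comp (tendsto_neg_atTop_atBot.comp hretop)
    have hdet := tendsto_det_Mmat Am1 A2 A3 hA2' hA3' lamseq hre hnorm hw
    rw [show ((1 - (0:ℂ) • Am1 : Matrix (Fin n) (Fin n) ℂ)).det = 1 by simp] at hdet
    obtain ⟨k, hk⟩ := (hdet.eventually_ne one_ne_zero).exists
    refine ⟨lamseq k, ?_⟩
    have hne : lamseq k ≠ 0 := by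
      intro h0
      have := hre k
      rw [h0] at this
      simp only [Complex.zero_re] at this
      have := hpos k
      have h1 : (lamseq k).re = max c 0 + 1 + k := by simp [hlamseq]
      rw [h0] at h1
      simp at h1
      linarith
    rw [hfdef]
    simp only []
    rw [det_Delta_eq Am1 A2 A3 hne]
    exact mul_ne_zero (pow_ne_zero _ (neg_ne_zero.2 hne)) hk
  -- by contradiction
  by_contra hfin
  have hS : S.Infinite := hfin
  by_cases hb : Bornology.IsBounded S
  · -- bounded case: accumulation point, identity theorem
    obtain ⟨r, hsub⟩ := hb.subset_closedBall 0
    obtain ⟨z₀, _, hacc⟩ := hS.exists_accPt_of_subset_isCompact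
      (isCompact_closedBall (0:ℂ) r) hsub
    rw [accPt_iff_frequently] at hacc
    have hfreq : ∃ᶠ z in 𝓝[≠] z₀, f z = 0 := by
      rw [frequently_nhdsWithin_iff]
      exact hacc.mono (fun z hz => ⟨hz.2.1, hz.1⟩)
    have hzero := ((differentiable_detDelta Am1 A2 A3 hA2' hA3').differentiableOn.analyticOnNhd
      isOpen_univ).eqOn_zero_of_preconnected_of_frequently_eq_zero
      isPreconnected_univ (mem_univ z₀) hfreq
    obtain ⟨z, hz⟩ := hexists
    exact hz (hzero (mem_univ z))
  · -- unbounded case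
    have hseq : ∀ k : ℕ, ∃ z, z ∈ S ∧ (k:ℝ) < ‖z‖ := by
      intro k
      by_contra h
      push_neg at h
      exact hb (isBounded_iff_forall_norm_le.2 ⟨k, fun z hz => (h z hz)⟩)
    choose u huS hun using hseq
    have hmem : ∀ k, Complex.exp (-(u k)) ∈ Metric.closedBall (0:ℂ) (Real.exp (-c)) := by
      intro k
      rw [Metric.mem_closedBall, dist_zero_right, hnormexp]
      exact Real.exp_le_exp.2 (neg_le_neg (huS k).2)
    obtain ⟨w, hwmem, φ, hφ, hconv⟩ :=
      tendsto_subseq_of_bounded Metric.isBounded_closedBall hmem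
    have hwball : ‖w‖ ≤ Real.exp (-c) := by
      rw [Metric.isClosed_closedBall.closure_eq] at hwmem
      rwa [Metric.mem_closedBall, dist_zero_right] at hwmem
    have hre : ∀ k, c ≤ (u (φ k)).re := fun k => (huS _).2
    have hnorm2 : Tendsto (fun k => ‖u (φ k)‖) atTop atTop := by
      refine tendsto_atTop_mono (fun k => ?_) tendsto_natCast_atTop_atTop
      exact le_trans (Nat.cast_le.2 hφ.le_apply) (hun (φ k)).le
    have hconv' : Tendsto (fun k => Complex.exp (-(u (φ k)))) atTop (𝓝 w) := hconv
    have hdet := tendsto_det_Mmat Am1 A2 A3 hA2' hA3' (fun k => u (φ k)) hre hnorm2 hconv'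
    have hzero : ∀ k, (Mmat Am1 A2 A3 (u (φ k))).det = 0 := by
      intro k
      have hz : (Delta Am1 A2 A3 (u (φ k))).det = 0 := (huS _).1
      have hne : u (φ k) ≠ 0 := by
        intro h0
        have := hun (φ k)
        rw [h0] at this
        simp only [norm_zero] at this
        exact absurd this (not_lt.2 (Nat.cast_nonneg _))
      rw [det_Delta_eq Am1 A2 A3 hne] at hz
      exact (mul_eq_zero.1 hz).resolve_left (pow_ne_zero _ (neg_ne_zero.2 hne))
    rw [show (fun k => (Mmat Am1 A2 A3 (u (φ k))).det) = fun _ => (0:ℂ) from funext hzero]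
      at hdet
    exact det_one_sub_smul_ne Am1 hc hwball (tendsto_nhds_unique hdet tendsto_const_nhds)
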